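/- Let 0 < λ < 1 and k, c ∈ ℝ. The set S = {(x,y,z) ∈ ℝ³ : z > 0, x² − z² + 2yz = k, (y−z)z^{−λ} = c} is bounded. -/

import Mathlib

lemma stmt_12_aux (w b : ℝ) (hb : 1 ≤ b) (hw : w ^ 2 ≤ b) : -b ≤ w ∧ w ≤ b := by
  constructor <;> nlinarith [sq_nonneg (w + b), sq_nonneg (w - b)]

/-- For `0 < λ < 1` and `k, c ∈ ℝ`, the set
`{(x,y,z) : z > 0, x² − z² + 2yz = k, (y−z)z^{−λ} = c}` is bounded. -/
theorem stmt_12 (l k c : ℝ) (h1 : 0 < l) (h2 : l < 1) :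
    Bornology.IsBounded {p : ℝ × ℝ × ℝ | 0 < p.2.2 ∧
      p.1 ^ 2 - p.2.2 ^ 2 + 2 * p.2.1 * p.2.2 = k ∧
      (p.2.1 - p.2.2) * p.2.2 ^ (-l : ℝ) = c} := by
  obtain ⟨Z, hZdef⟩ : ∃ Z : ℝ, Z = max 1 ((2 * |c| + |k| + 1) ^ (1 / (1 - l)) : ℝ) :=
    ⟨_, rfl⟩
  have hZ1 : (1 : ℝ) ≤ Z := hZdef ▸ le_max_left _ _
  have hZl1 : (1 : ℝ) ≤ Z ^ (l : ℝ) := Real.one_le_rpow hZ1 h1.le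
  obtain ⟨B, hBdef⟩ : ∃ B : ℝ,
      B = Z + |c| * Z ^ (l : ℝ) + |k| + Z ^ 2 + 2 * |c| * (Z ^ (l : ℝ) * Z) + 1 := ⟨_, rfl⟩
  have hn1 : (0 : ℝ) ≤ |c| * Z ^ (l : ℝ) :=
    mul_nonneg (abs_nonneg c) (le_trans zero_le_one hZl1)
  have hn2 : (0 : ℝ) ≤ Z ^ 2 := sq_nonneg Z
  have hn3 : (0 : ℝ) ≤ 2 * |c| * (Z ^ (l : ℝ) * Z) :=
    mul_nonneg (mul_nonneg (by norm_num) (abs_nonneg c))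
      (mul_nonneg (le_trans zero_le_one hZl1) (le_trans zero_le_one hZ1))
  have hn4 : (0 : ℝ) ≤ |k| := abs_nonneg k
  have hB1 : (1 : ℝ) ≤ B := by linarith [hBdef]
  apply Bornology.IsBounded.subset
    ((Metric.isBounded_Icc (-B) B).prod
      ((Metric.isBounded_Icc (-B) B).prod (Metric.isBounded_Icc (-B) B)))
  rintro ⟨x, y, z⟩ ⟨hz, he, hf⟩
  simp only [Set.mem_setOf_eq] at hz he hf
  have hzl : (0 : ℝ) < z ^ (l : ℝ) := Real.rpow_pos_of_pos hz _
  -- derive y - z = c * z^l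
  have hf' : y - z = c * z ^ (l : ℝ) := by
    rw [Real.rpow_neg hz.le] at hf
    field_simp at hf
    linarith [hf]
  -- x^2 formula
  have hx2 : x ^ 2 = k - z ^ 2 - 2 * c * (z ^ (l : ℝ) * z) := by
    have : y = z + c * z ^ (l : ℝ) := by linarith
    rw [this] at he; ring_nf at he ⊢; linarith
  -- z is bounded by Z
  have hzZ : z ≤ Z := by
    by_contra hcon
    push_neg at hcon
    have hz1 : (1 : ℝ) ≤ z := le_trans hZ1 hcon.le
    have hbase : (0 : ℝ) ≤ 2 * |c| + |k| + 1 := by positivity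
    have hbd : (2 * |c| + |k| + 1) ^ (1 / (1 - l)) < z := lt_of_le_of_lt (hZdef ▸ le_max_right _ _) hcon
    have hb : 2 * |c| + |k| + 1 < z ^ ((1 : ℝ) - l) := by
      have h := Real.rpow_lt_rpow (Real.rpow_nonneg hbase _) hbd (by linarith : (0:ℝ) < 1 - l)
      rwa [← Real.rpow_mul hbase, one_div,
        inv_mul_cancel₀ (by linarith : (1:ℝ) - l ≠ 0), Real.rpow_one] at h
    have hab : z ^ (l : ℝ) * z ^ ((1 : ℝ) - l) = z := by
      rw [← Real.rpow_add hz]; norm_num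
    have ha : (1 : ℝ) ≤ z ^ (l : ℝ) := Real.one_le_rpow hz1 h1.le
    have haz : (1 : ℝ) ≤ z ^ (l : ℝ) * z := one_le_mul_of_one_le_of_one_le ha hz1
    have hkey : z ^ 2 + 2 * c * (z ^ (l : ℝ) * z) ≤ k := by nlinarith [sq_nonneg x]
    have heq : z ^ 2 + 2 * c * (z ^ (l : ℝ) * z) =
        (z ^ (l : ℝ) * z) * (z ^ ((1 : ℝ) - l) + 2 * c) := by
      linear_combination (-z) * hab
    have hpos : (0 : ℝ) < z ^ ((1 : ℝ) - l) + 2 * c := by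
      have := neg_abs_le c; linarith
    have h6 : k + 1 < z ^ ((1 : ℝ) - l) + 2 * c := by
      have := le_abs_self k; have := neg_abs_le c; linarith
    have h7 : z ^ ((1 : ℝ) - l) + 2 * c ≤ (z ^ (l : ℝ) * z) * (z ^ ((1 : ℝ) - l) + 2 * c) :=
      le_mul_of_one_le_left hpos.le haz
    linarith
  have hzB : z ≤ B := by linarith [hBdef]
  have hzlZ : z ^ (l : ℝ) ≤ Z ^ (l : ℝ) := Real.rpow_le_rpow hz.le hzZ h1.le
  -- y bounds
  have hy : y = z + c * z ^ (l : ℝ) := by linarith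
  have e1 : c * z ^ (l : ℝ) ≤ |c| * Z ^ (l : ℝ) :=
    le_trans (mul_le_mul_of_nonneg_right (le_abs_self c) hzl.le)
      (mul_le_mul_of_nonneg_left hzlZ (abs_nonneg c))
  have e2 : -(|c| * Z ^ (l : ℝ)) ≤ c * z ^ (l : ℝ) := by
    have t1 : -|c| * z ^ (l : ℝ) ≤ c * z ^ (l : ℝ) :=
      mul_le_mul_of_nonneg_right (neg_abs_le c) hzl.le
    have t2 : -|c| * Z ^ (l : ℝ) ≤ -|c| * z ^ (l : ℝ) :=
      mul_le_mul_of_nonpos_left hzlZ (neg_nonpos.mpr (abs_nonneg c))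
    linarith
  have hyB : -B ≤ y ∧ y ≤ B := by
    rw [hy]; constructor <;> linarith [hBdef]
  -- x bounds
  have hprod : z ^ (l : ℝ) * z ≤ Z ^ (l : ℝ) * Z :=
    mul_le_mul hzlZ hzZ hz.le (le_trans zero_le_one hZl1)
  have h1' : -(2 * c) * (z ^ (l : ℝ) * z) ≤ 2 * |c| * (Z ^ (l : ℝ) * Z) := by
    have t1 : -(2 * c) * (z ^ (l : ℝ) * z) ≤ 2 * |c| * (z ^ (l : ℝ) * z) := by
      have := mul_le_mul_of_nonneg_right (neg_abs_le c) (mul_nonneg hzl.le hz.le)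
      nlinarith
    have t2 : 2 * |c| * (z ^ (l : ℝ) * z) ≤ 2 * |c| * (Z ^ (l : ℝ) * Z) :=
      mul_le_mul_of_nonneg_left hprod (by positivity)
    linarith
  have hx2B : x ^ 2 ≤ B := by
    linarith only [hx2, h1', le_abs_self k, sq_nonneg z, hBdef, hn1, hn2, hZ1]
  have hxB : -B ≤ x ∧ x ≤ B := stmt_12_aux x B hB1 hx2B
  simp only [Set.mem_prod, Set.mem_Icc]
  exact ⟨⟨hxB.1, hxB.2⟩, ⟨hyB.1, hyB.2⟩, ⟨by linarith, hzB⟩⟩
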